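/- Let N ≥ 4 be an integer, 0 < δ < 1/4, f : [N, 2N] → ℝ any function, and A a real number with 1 ≤ A ≤ N. For each integer a with 1 ≤ a ≤ A, let R(Δ_a f, N, 2δ) denote the number of integers n with N ≤ n ≤ 2N − a and ‖f(n+a) − f(n)‖ < 2δ. Then R(f,N,δ) ≤ N/A + Σ_{1 ≤ a ≤ A} R(Δ_a f, N, 2δ) + 1. -/

import Mathlib

open Finset

lemma round_nearest (x : ℝ) (m : ℤ) : |x - round x| ≤ |x - (m:ℝ)| := by
  by_contra h
  push_neg at h
  have h1 : |x - round x| ≤ 1/2 := abs_sub_round x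
  have h2 : |((round x : ℝ)) - m| < 1 := by
    calc |((round x : ℝ)) - m| = |((round x:ℝ) - x) - ((m:ℝ) - x)| := by ring_nf
      _ ≤ |(round x:ℝ) - x| + |(m:ℝ) - x| := abs_sub _ _
      _ = |x - round x| + |x - m| := by rw [abs_sub_comm, abs_sub_comm (m:ℝ) x]
      _ < 1/2 + 1/2 := by linarith
      _ = 1 := by norm_num
  have h3 : |round x - m| < 1 := by exact_mod_cast (by push_cast; exact h2 : |((round x - m : ℤ):ℝ)| < 1)
  have : round x = m := by rw [abs_lt] at h3; omega
  rw [this] at h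
  exact lt_irrefl _ h

theorem stmt_2 (N : ℕ) (hN : 4 ≤ N)
    (δ : ℝ) (hδ0 : 0 < δ) (hδ1 : δ < 1/4)
    (f : ℝ → ℝ) (A : ℝ) (hA1 : 1 ≤ A) (hAN : A ≤ N) :
    (({n : ℤ | (N:ℤ) ≤ n ∧ n ≤ 2*N ∧ |f n - round (f n)| < δ}.ncard : ℝ)) ≤
      (N:ℝ) / A
      + ∑ a ∈ Finset.Icc (1:ℤ) ⌊A⌋,
          (({n : ℤ | (N:ℤ) ≤ n ∧ n ≤ 2*N - a ∧
              |(f ((n + a : ℤ) : ℝ) - f n) - round (f ((n + a : ℤ) : ℝ) - f n)| < 2*δ}.ncard : ℝ))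
      + 1 := by
  classical
  set g : ℤ := ⌊A⌋ + 1 with hgdef
  have hfl : 1 ≤ ⌊A⌋ := by exact_mod_cast Int.le_floor.2 (by exact_mod_cast hA1)
  have hg0 : 0 < g := by omega
  set S : Finset ℤ := (Finset.Icc (N:ℤ) (2*N)).filter (fun n => |f n - round (f n)| < δ) with hSdef
  have hSset : {n : ℤ | (N:ℤ) ≤ n ∧ n ≤ 2*N ∧ |f n - round (f n)| < δ} = ↑S := by
    ext n; simp [hSdef, Finset.mem_Icc, and_assoc]
  set R : ℤ → Finset ℤ := fun a => (Finset.Icc (N:ℤ) (2*N - a)).filter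
      (fun n => |(f ((n + a : ℤ) : ℝ) - f n) - round (f ((n + a : ℤ) : ℝ) - f n)| < 2*δ) with hRdef
  have hRset : ∀ a : ℤ, {n : ℤ | (N:ℤ) ≤ n ∧ n ≤ 2*N - a ∧
      |(f ((n + a : ℤ) : ℝ) - f n) - round (f ((n + a : ℤ) : ℝ) - f n)| < 2*δ} = ↑(R a) := by
    intro a; ext n; simp [hRdef, Finset.mem_Icc, and_assoc]
  set p : ℤ → Prop := fun n => ∀ a ∈ Finset.Icc (1:ℤ) ⌊A⌋, n + a ∉ S with hpdef
  set T := S.filter p with hTdef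
  set U := S.filter (fun n => ¬ p n) with hUdef
  have hsplit : T.card + U.card = S.card := Finset.card_filter_add_card_filter_not _
  -- U bound
  have hUsub : U ⊆ (Finset.Icc (1:ℤ) ⌊A⌋).biUnion R := by
    intro n hn
    rw [hUdef, Finset.mem_filter] at hn
    obtain ⟨hnS, hnp⟩ := hn
    simp only [hpdef, not_forall, not_not, exists_prop] at hnp
    obtain ⟨a, ha, hna⟩ := hnp
    rw [Finset.mem_biUnion]
    refine ⟨a, ha, ?_⟩
    rw [hSdef, Finset.mem_filter, Finset.mem_Icc] at hnS hna
    rw [hRdef, Finset.mem_filter, Finset.mem_Icc]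
    refine ⟨⟨hnS.1.1, by omega⟩, ?_⟩
    have key : |(f ((n + a : ℤ) : ℝ) - f n) - (((round (f ((n + a : ℤ) : ℝ)) - round (f n) : ℤ)):ℝ)| < 2*δ := by
      have hc : (((round (f ((n + a : ℤ) : ℝ)) - round (f n) : ℤ)):ℝ)
          = ((round (f ((n + a : ℤ) : ℝ)) : ℝ)) - ((round (f n) : ℝ)) := by push_cast; ring
      rw [hc]
      calc |(f ((n + a : ℤ) : ℝ) - f n) - (((round (f ((n + a : ℤ) : ℝ)) : ℝ)) - (round (f n) : ℝ))|
          = |(f ((n + a : ℤ) : ℝ) - round (f ((n + a : ℤ) : ℝ))) - (f n - round (f n))| := by ring_nf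
        _ ≤ |f ((n + a : ℤ) : ℝ) - round (f ((n + a : ℤ) : ℝ))| + |f n - round (f n)| := abs_sub _ _
        _ < δ + δ := add_lt_add hna.2 hnS.2
        _ = 2*δ := by ring
    exact lt_of_le_of_lt (round_nearest _ _) key
  have hUcard : U.card ≤ ∑ a ∈ Finset.Icc (1:ℤ) ⌊A⌋, (R a).card :=
    le_trans (Finset.card_le_card hUsub) (Finset.card_biUnion_le)
  -- T bound
  have hTcard : T.card ≤ (Finset.Icc (0:ℤ) ((N:ℤ)/g)).card := by
    apply Finset.card_le_card_of_injOn (fun n => (n - N) / g)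
    · intro n hn
      rw [Finset.mem_coe, hTdef, Finset.mem_filter] at hn
      have hnS := hn.1
      rw [hSdef, Finset.mem_filter, Finset.mem_Icc] at hnS
      rw [Finset.mem_coe, Finset.mem_Icc]
      constructor
      · exact Int.ediv_nonneg (by omega) (by omega)
      · exact Int.ediv_le_ediv hg0 (by omega)
    · intro n hn m hm hnm
      simp only at hnm
      rw [Finset.mem_coe] at hn hm
      rw [hTdef, Finset.mem_filter] at hn hm
      have h1 := Int.mul_ediv_add_emod (n - N) g
      have h2 := Int.mul_ediv_add_emod (m - N) g
      rw [hnm] at h1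
      have h3 : 0 ≤ (n - N) % g := Int.emod_nonneg _ (by omega)
      have h4 : (n - N) % g < g := Int.emod_lt_of_pos _ hg0
      have h5 : 0 ≤ (m - N) % g := Int.emod_nonneg _ (by omega)
      have h6 : (m - N) % g < g := Int.emod_lt_of_pos _ hg0
      have hclose : |n - m| < g := by rw [abs_lt]; omega
      by_contra hne
      rcases lt_trichotomy n m with hlt | heq | hgt
      · have : m - n ∈ Finset.Icc (1:ℤ) ⌊A⌋ := by
          rw [Finset.mem_Icc]; rw [abs_lt] at hclose; omega
        exact hn.2 (m - n) this (by simpa using hm.1)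
      · exact hne heq
      · have : n - m ∈ Finset.Icc (1:ℤ) ⌊A⌋ := by
          rw [Finset.mem_Icc]; rw [abs_lt] at hclose; omega
        exact hm.2 (n - m) this (by simpa using hn.1)
  have hNg : 0 ≤ (N:ℤ)/g := Int.ediv_nonneg (by positivity) (by omega)
  have hIcc : (Finset.Icc (0:ℤ) ((N:ℤ)/g)).card = ((N:ℤ)/g + 1).toNat := by
    rw [Int.card_Icc]; congr 1; omega
  -- real estimates
  have hTreal : (T.card : ℝ) ≤ (N:ℝ)/A + 1 := by
    have h1 : (T.card : ℝ) ≤ (((N:ℤ)/g : ℤ) : ℝ) + 1 := by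
      have := hTcard
      rw [hIcc] at this
      have : (T.card : ℝ) ≤ ((((N:ℤ)/g + 1).toNat : ℤ) : ℝ) := by exact_mod_cast this
      rwa [Int.toNat_of_nonneg (by omega), Int.cast_add, Int.cast_one] at this
    have h2 : (((N:ℤ)/g : ℤ) : ℝ) ≤ (N:ℝ)/(g:ℝ) := by
      rw [le_div_iff₀ (by exact_mod_cast hg0)]
      have := Int.ediv_mul_le (N:ℤ) (b := g)
      exact_mod_cast Int.ediv_mul_le (N:ℤ) (by omega : g ≠ 0)
    have hAg : A ≤ (g:ℝ) := by
      have := Int.lt_floor_add_one A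
      push_cast [hgdef]
      push_cast at this ⊢
      linarith
    have h3 : (N:ℝ)/(g:ℝ) ≤ (N:ℝ)/A := by
      apply div_le_div_of_nonneg_left (by positivity) (by linarith) hAg
    linarith
  -- assemble
  rw [hSset, Set.ncard_coe_finset]
  have hsum : ∑ a ∈ Finset.Icc (1:ℤ) ⌊A⌋,
      (({n : ℤ | (N:ℤ) ≤ n ∧ n ≤ 2*N - a ∧
        |(f ((n + a : ℤ) : ℝ) - f n) - round (f ((n + a : ℤ) : ℝ) - f n)| < 2*δ}.ncard : ℝ))
      = ∑ a ∈ Finset.Icc (1:ℤ) ⌊A⌋, ((R a).card : ℝ) := by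
    apply Finset.sum_congr rfl
    intro a _
    rw [hRset a, Set.ncard_coe_finset]
  rw [hsum]
  have hScard : (S.card : ℝ) = (T.card : ℝ) + (U.card : ℝ) := by exact_mod_cast hsplit.symm
  rw [hScard]
  have hUreal : (U.card : ℝ) ≤ ∑ a ∈ Finset.Icc (1:ℤ) ⌊A⌋, ((R a).card : ℝ) := by
    calc (U.card : ℝ) ≤ ((∑ a ∈ Finset.Icc (1:ℤ) ⌊A⌋, (R a).card : ℕ) : ℝ) := by exact_mod_cast hUcard
      _ = _ := by push_cast; rfl
  linarith
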